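/- Suppose P{A∈(0,1]}=1; P{B>x} ~ a·x^c·e^{−bx} as x→∞ for some a,b>0 and c<−1; E[e^{bB}·1_{{A=1}}]<1; and for each y∈ℝ, P{Ay+B>x} ~ f(y)·P{B>x} as x→∞, where f is a nonnegative measurable function. Let Y be a random variable independent of (A,B) which satisfies P{Y>x} ~ c_Y·P{B>x} as x→∞ for some constant c_Y>0. Then E[f(Y)]<∞ and P{AY+B>x} ~ (c_Y·E[e^{bB}·1_{{A=1}}] + E[f(Y)])·P{B>x} as x→∞. -/

import Mathlib

open MeasureTheory ProbabilityTheory Filter Finset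

namespace Stmt14Aux

noncomputable def phi (a b c : ℝ) (x : ℝ) : ℝ := a * x ^ c * Real.exp (-b * x)

lemma phi_pos {a b c : ℝ} (ha : 0 < a) {x : ℝ} (hx : 0 < x) : 0 < phi a b c x := by
  unfold phi
  positivity

lemma sub_tendsto_atTop (t : ℝ) : Tendsto (fun x : ℝ => x - t) atTop atTop := by
  simpa [sub_eq_add_neg] using tendsto_atTop_add_const_right atTop (-t) (tendsto_id (α := ℝ))

lemma phi_ratio (a b c : ℝ) (ha : 0 < a) (t : ℝ) :
    Tendsto (fun x => phi a b c (x - t) / phi a b c x) atTop (nhds (Real.exp (b * t))) := by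
  have h1 : Tendsto (fun x : ℝ => ((x - t) / x) ^ c) atTop (nhds 1) := by
    have hbase : Tendsto (fun x : ℝ => (x - t) / x) atTop (nhds 1) := by
      have : (fun x : ℝ => (x - t) / x) =ᶠ[atTop] fun x => 1 - t / x := by
        filter_upwards [eventually_gt_atTop 0] with x hx
        field_simp
      rw [tendsto_congr' this]
      simpa using tendsto_const_nhds.sub (tendsto_const_nhds.div_atTop (f := fun _ : ℝ => t) tendsto_id)
    have hcont : ContinuousAt (fun u : ℝ => u ^ c) 1 :=
      Real.continuousAt_rpow_const 1 c (Or.inl one_ne_zero)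
    simpa [Function.comp_def] using (hcont.tendsto.comp hbase)
  have heq : (fun x => phi a b c (x - t) / phi a b c x)
      =ᶠ[atTop] fun x => ((x - t) / x) ^ c * Real.exp (b * t) := by
    filter_upwards [eventually_gt_atTop (max t 0 + 1)] with x hx
    have hm1 := le_max_left t 0
    have hm2 := le_max_right t 0
    have hx0 : (0:ℝ) < x := by linarith
    have hxt : (0:ℝ) < x - t := by linarith
    unfold phi
    rw [Real.div_rpow hxt.le hx0.le]
    rw [show -b * (x - t) = b * t + -b * x by ring, Real.exp_add]
    have e1 : Real.exp (-b * x) ≠ 0 := Real.exp_ne_zero _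
    have e2 : x ^ c ≠ 0 := (Real.rpow_pos_of_pos hx0 c).ne'
    field_simp
  rw [tendsto_congr' heq]
  simpa using h1.mul_const (Real.exp (b * t))

/-- Cross ratio limit. -/
lemma tail_cross {a b c : ℝ} (ha : 0 < a) {g h : ℝ → ℝ} {k1 k2 : ℝ} (hk1 : k1 ≠ 0)
    (hg : Tendsto (fun x => g x / phi a b c x) atTop (nhds k1))
    (hh : Tendsto (fun x => h x / phi a b c x) atTop (nhds k2)) (t : ℝ) :
    Tendsto (fun x => h (x - t) / g x) atTop (nhds (k2 * Real.exp (b * t) / k1)) := by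
  have hinv : Tendsto (fun x => phi a b c x / g x) atTop (nhds k1⁻¹) := by
    have h2 : Tendsto (fun x => (g x / phi a b c x)⁻¹) atTop (nhds k1⁻¹) := hg.inv₀ hk1
    simpa [inv_div] using h2
  have hcomp : Tendsto (fun x => h (x - t) / phi a b c (x - t)) atTop (nhds k2) :=
    hh.comp (sub_tendsto_atTop t)
  have hmul := (hcomp.mul (phi_ratio a b c ha t)).mul hinv
  have heq : (fun x => ((h (x - t) / phi a b c (x - t)) * (phi a b c (x - t) / phi a b c x)) * (phi a b c x / g x))
      =ᶠ[atTop] fun x => h (x - t) / g x := by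
    filter_upwards [eventually_gt_atTop (max t 0 + 1)] with x hx
    have hm1 := le_max_left t 0
    have hm2 := le_max_right t 0
    have hx0 : (0:ℝ) < x := by linarith
    have hxt : (0:ℝ) < x - t := by linarith
    have hp1 : phi a b c (x - t) ≠ 0 := (phi_pos ha hxt).ne'
    have hp2 : phi a b c x ≠ 0 := (phi_pos ha hx0).ne'
    rcases eq_or_ne (g x) 0 with hgx | hgx
    · simp [hgx]
    · field_simp
  rw [tendsto_congr' heq] at hmul
  rw [div_eq_mul_inv]
  exact hmul

end Stmt14Aux

namespace Stmt14Aux2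
open Stmt14Aux

lemma tail_sandwich {a b c k : ℝ} (ha : 0 < a) (hk : 0 < k) {g : ℝ → ℝ}
    (hg : Tendsto (fun x => g x / phi a b c x) atTop (nhds k)) :
    ∃ x0 : ℝ, 1 ≤ x0 ∧ ∀ x, x0 ≤ x → k / 2 * phi a b c x ≤ g x ∧ g x ≤ 2 * k * phi a b c x := by
  have h1 : ∀ᶠ x in atTop, |g x / phi a b c x - k| < k / 2 := by
    have := Metric.tendsto_nhds.mp hg (k / 2) (by linarith)
    simpa [Real.dist_eq] using this
  have h2 : ∀ᶠ x in atTop, (1:ℝ) ≤ x := eventually_ge_atTop 1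
  rcases (h1.and h2).exists_forall_of_atTop with ⟨x0, hx0⟩
  refine ⟨max x0 1, le_max_right _ _, fun x hx => ?_⟩
  obtain ⟨habs, -⟩ := hx0 x (le_trans (le_max_left _ _) hx)
  have hx1 : (1:ℝ) ≤ x := le_trans (le_max_right _ _) hx
  have hφ : 0 < phi a b c x := phi_pos ha (by linarith)
  have hlo : k / 2 < g x / phi a b c x := by
    have := abs_lt.mp habs
    linarith [this.1]
  have hhi : g x / phi a b c x < 2 * k := by
    have := abs_lt.mp habs
    linarith [this.2]
  have hcancel : g x / phi a b c x * phi a b c x = g x := div_mul_cancel₀ _ hφ.ne'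
  constructor
  · have := mul_le_mul_of_nonneg_right hlo.le hφ.le
    rw [hcancel] at this
    linarith
  · have := mul_le_mul_of_nonneg_right hhi.le hφ.le
    rw [hcancel] at this
    linarith

lemma tail_pos {a b c k : ℝ} (ha : 0 < a) (hk : 0 < k) {g : ℝ → ℝ} (hanti : Antitone g)
    (hg : Tendsto (fun x => g x / phi a b c x) atTop (nhds k)) : ∀ x, 0 < g x := by
  obtain ⟨x0, hx01, hs⟩ := tail_sandwich ha hk hg
  intro x
  have h1 : g (max x x0) ≤ g x := hanti (le_max_left _ _)
  have h2 := (hs (max x x0) (le_max_right _ _)).1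
  have hφ : 0 < phi a b c (max x x0) := phi_pos ha (by
    have := le_max_right x x0; linarith)
  nlinarith

lemma tail_global {a b c k : ℝ} (ha : 0 < a) (hb : 0 < b) (hcneg : c < 0) (hk : 0 < k)
    {g : ℝ → ℝ} (hanti : Antitone g) (hle1 : ∀ x, g x ≤ 1)
    (hg : Tendsto (fun x => g x / phi a b c x) atTop (nhds k)) :
    ∃ C : ℝ, 0 < C ∧ ∀ u, g u ≤ C * Real.exp (-b * u) := by
  obtain ⟨x0, hx01, hs⟩ := tail_sandwich ha hk hg
  refine ⟨max (2 * k * a * x0 ^ c) (Real.exp (b * x0)), lt_of_lt_of_le (Real.exp_pos _) (le_max_right _ _), fun u => ?_⟩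
  rcases le_or_gt x0 u with hu | hu
  · have h1 := (hs u hu).2
    have h2 : u ^ c ≤ x0 ^ c := Real.rpow_le_rpow_of_nonpos (by linarith) hu hcneg.le
    have : g u ≤ 2 * k * a * x0 ^ c * Real.exp (-b * u) := by
      unfold phi at h1
      have h3 : u ^ c * Real.exp (-b * u) ≤ x0 ^ c * Real.exp (-b * u) :=
        mul_le_mul_of_nonneg_right h2 (Real.exp_pos _).le
      have h4 : 2 * k * a * (u ^ c * Real.exp (-b * u)) ≤ 2 * k * a * (x0 ^ c * Real.exp (-b * u)) :=
        mul_le_mul_of_nonneg_left h3 (by positivity)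
      calc g u ≤ 2 * k * (a * u ^ c * Real.exp (-b * u)) := h1
        _ = 2 * k * a * (u ^ c * Real.exp (-b * u)) := by ring
        _ ≤ 2 * k * a * (x0 ^ c * Real.exp (-b * u)) := h4
        _ = 2 * k * a * x0 ^ c * Real.exp (-b * u) := by ring
    refine le_trans this (mul_le_mul_of_nonneg_right (le_max_left _ _) (Real.exp_pos _).le)
  · have h1 : g u ≤ 1 := hle1 u
    have h2 : (1:ℝ) ≤ Real.exp (b * x0) * Real.exp (-b * u) := by
      rw [← Real.exp_add]
      apply Real.one_le_exp
      nlinarith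
    calc g u ≤ 1 := h1
      _ ≤ Real.exp (b * x0) * Real.exp (-b * u) := h2
      _ ≤ max (2 * k * a * x0 ^ c) (Real.exp (b * x0)) * Real.exp (-b * u) :=
          mul_le_mul_of_nonneg_right (le_max_right _ _) (Real.exp_pos _).le

/-- Uniform ratio bound: `h (x - t) ≤ K * exp (b * max t 0) * g x` for `t ≤ x/2`, `x` large. -/
lemma tail_unif {a b c k1 k2 : ℝ} (ha : 0 < a) (hb : 0 < b) (hcneg : c < 0)
    (hk1 : 0 < k1) (hk2 : 0 < k2) {g h : ℝ → ℝ} (hantih : Antitone h)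
    (hg : Tendsto (fun x => g x / phi a b c x) atTop (nhds k1))
    (hh : Tendsto (fun x => h x / phi a b c x) atTop (nhds k2)) :
    ∃ K x1 : ℝ, 0 < K ∧ 0 < x1 ∧ ∀ x, x1 ≤ x → ∀ t, t ≤ x / 2 →
      h (x - t) ≤ K * Real.exp (b * max t 0) * g x := by
  obtain ⟨x0g, hx0g1, hsg⟩ := tail_sandwich ha hk1 hg
  obtain ⟨x0h, hx0h1, hsh⟩ := tail_sandwich ha hk2 hh
  set z := max x0g x0h with hz
  have hz1 : (1:ℝ) ≤ z := le_trans hx0g1 (le_max_left _ _)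
  refine ⟨4 * k2 / k1 * 2 ^ (-c), 2 * z, by positivity, by linarith, fun x hx t ht => ?_⟩
  have hzg : x0g ≤ z := le_max_left _ _
  have hzh : x0h ≤ z := le_max_right _ _
  have hxz : z ≤ x := by linarith
  have hx0 : (0:ℝ) < x := by linarith
  have hglo := (hsg x (by linarith)).1
  have hφx : 0 < phi a b c x := phi_pos ha hx0
  have h2c : (1:ℝ) ≤ 2 ^ (-c) := Real.one_le_rpow one_le_two (by linarith)
  have h2cpos : (0:ℝ) < 2 ^ (-c) := Real.rpow_pos_of_pos two_pos _
  have hexpt : (0:ℝ) < Real.exp (b * max t 0) := Real.exp_pos _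
  have hφle : phi a b c x ≤ 2 / k1 * g x := by
    have heq : phi a b c x = 2 / k1 * (k1 / 2 * phi a b c x) := by field_simp
    rw [heq]
    exact mul_le_mul_of_nonneg_left hglo (by positivity)
  rcases le_or_gt t 0 with ht0 | ht0
  · have h1 : h (x - t) ≤ h x := hantih (by linarith)
    have h2 : h x ≤ 2 * k2 * phi a b c x := (hsh x (by linarith)).2
    have hmax : max t 0 = 0 := max_eq_right ht0
    rw [hmax, mul_zero, Real.exp_zero, mul_one]
    calc h (x - t) ≤ 2 * k2 * phi a b c x := le_trans h1 h2
      _ ≤ 2 * k2 * (2 / k1 * g x) := mul_le_mul_of_nonneg_left hφle (by positivity)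
      _ = 4 * k2 / k1 * 1 * g x := by field_simp; ring
      _ ≤ 4 * k2 / k1 * 2 ^ (-c) * g x := by
          have hgpos : 0 < g x := by
            calc (0:ℝ) < k1 / 2 * phi a b c x := by positivity
              _ ≤ g x := hglo
          have := mul_le_mul_of_nonneg_left h2c (by positivity : (0:ℝ) ≤ 4 * k2 / k1)
          exact mul_le_mul_of_nonneg_right (by linarith) hgpos.le
  · have hxt : x / 2 ≤ x - t := by linarith
    have hxt0 : (0:ℝ) < x - t := by linarith
    have hx20 : (0:ℝ) < x / 2 := by linarith
    have h1 : h (x - t) ≤ 2 * k2 * phi a b c (x - t) := (hsh (x - t) (by linarith)).2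
    have hmax : max t 0 = t := max_eq_left ht0.le
    rw [hmax]
    have h2 : (x - t) ^ c ≤ (x / 2) ^ c := Real.rpow_le_rpow_of_nonpos hx20 hxt hcneg.le
    have h3 : (x / 2) ^ c = x ^ c * 2 ^ (-c) := by
      rw [Real.div_rpow hx0.le (by norm_num : (0:ℝ) ≤ 2), Real.rpow_neg (by norm_num : (0:ℝ) ≤ 2)]
      rw [div_eq_mul_inv]
    have h4 : Real.exp (-b * (x - t)) = Real.exp (b * t) * Real.exp (-b * x) := by
      rw [← Real.exp_add]; congr 1; ring
    have h5 : phi a b c (x - t) ≤ 2 ^ (-c) * Real.exp (b * t) * phi a b c x := by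
      unfold phi
      rw [h4]
      have hle : (x - t) ^ c ≤ x ^ c * 2 ^ (-c) := by rw [← h3]; exact h2
      have hexp : (0:ℝ) ≤ Real.exp (b * t) * Real.exp (-b * x) := by positivity
      calc a * (x - t) ^ c * (Real.exp (b * t) * Real.exp (-b * x))
          ≤ a * (x ^ c * 2 ^ (-c)) * (Real.exp (b * t) * Real.exp (-b * x)) :=
            mul_le_mul_of_nonneg_right (mul_le_mul_of_nonneg_left hle ha.le) hexp
        _ = 2 ^ (-c) * Real.exp (b * t) * (a * x ^ c * Real.exp (-b * x)) := by ring
    calc h (x - t) ≤ 2 * k2 * phi a b c (x - t) := h1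
      _ ≤ 2 * k2 * (2 ^ (-c) * Real.exp (b * t) * phi a b c x) :=
          mul_le_mul_of_nonneg_left h5 (by positivity)
      _ = 2 * k2 * 2 ^ (-c) * Real.exp (b * t) * phi a b c x := by ring
      _ ≤ 2 * k2 * 2 ^ (-c) * Real.exp (b * t) * (2 / k1 * g x) :=
          mul_le_mul_of_nonneg_left hφle (by positivity)
      _ = 4 * k2 / k1 * 2 ^ (-c) * Real.exp (b * t) * g x := by field_simp; ring

end Stmt14Aux2

namespace Stmt14Aux3

lemma Ioi_eq_iUnion : Set.Ioi (0:ℝ) = ⋃ n : ℕ, Set.Ioc (n:ℝ) (n+1) := by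
  ext y
  simp only [Set.mem_Ioi, Set.mem_iUnion, Set.mem_Ioc]
  constructor
  · intro hy
    have h1 : 1 ≤ ⌈y⌉₊ := Nat.one_le_ceil_iff.mpr hy
    refine ⟨⌈y⌉₊ - 1, ?_, ?_⟩
    · have h2 : (⌈y⌉₊ : ℝ) < y + 1 := Nat.ceil_lt_add_one hy.le
      have h3 : ((⌈y⌉₊ - 1 : ℕ) : ℝ) = (⌈y⌉₊ : ℝ) - 1 := by
        push_cast [Nat.cast_sub h1]; ring
      linarith
    · have h4 : y ≤ (⌈y⌉₊ : ℝ) := Nat.le_ceil y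
      have h3 : ((⌈y⌉₊ - 1 : ℕ) : ℝ) = (⌈y⌉₊ : ℝ) - 1 := by
        push_cast [Nat.cast_sub h1]; ring
      linarith
  · rintro ⟨n, hn1, -⟩
    exact lt_of_le_of_lt (Nat.cast_nonneg n) hn1

lemma Ioc_pairwise_disjoint : Pairwise (Function.onFun Disjoint fun n : ℕ => Set.Ioc (n:ℝ) (n+1)) := by
  intro m n hmn
  simp only [Function.onFun]
  rw [Set.Ioc_disjoint_Ioc]
  rcases hmn.lt_or_gt with h | h
  · have h1 : (m:ℝ) + 1 ≤ (n:ℝ) := by exact_mod_cast h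
    exact le_trans (min_le_left _ _) (le_trans h1 (le_max_right _ _))
  · have h1 : (n:ℝ) + 1 ≤ (m:ℝ) := by exact_mod_cast h
    exact le_trans (min_le_right _ _) (le_trans h1 (le_max_left _ _))

/-- Finiteness of the exponential moment from a tail bound. -/
lemma exp_moment_fin (μ : Measure ℝ) [IsFiniteMeasure μ] {b c C s0 : ℝ}
    (hb : 0 < b) (hc : c < -1) (hC : 0 ≤ C) (hs0 : 1 ≤ s0)
    (htail : ∀ s : ℝ, s0 ≤ s → μ (Set.Ioi s) ≤ ENNReal.ofReal (C * s ^ c * Real.exp (-b * s))) :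
    ∫⁻ y, ENNReal.ofReal (Real.exp (b * y)) ∂μ < ⊤ := by
  have hmeas : Measurable fun y : ℝ => ENNReal.ofReal (Real.exp (b * y)) :=
    (Real.continuous_exp.comp (continuous_const.mul continuous_id)).measurable.ennreal_ofReal
  -- split at 0
  have hsplit : ∫⁻ y, ENNReal.ofReal (Real.exp (b * y)) ∂μ
      = (∫⁻ y in Set.Iic 0, ENNReal.ofReal (Real.exp (b * y)) ∂μ)
        + ∫⁻ y in Set.Ioi 0, ENNReal.ofReal (Real.exp (b * y)) ∂μ := by
    rw [← lintegral_add_compl _ (measurableSet_Iic (a := (0:ℝ))), Set.compl_Iic]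
  rw [hsplit]
  have hpart1 : ∫⁻ y in Set.Iic 0, ENNReal.ofReal (Real.exp (b * y)) ∂μ ≤ μ Set.univ := by
    calc ∫⁻ y in Set.Iic 0, ENNReal.ofReal (Real.exp (b * y)) ∂μ
        ≤ ∫⁻ _ in Set.Iic 0, 1 ∂μ := by
          apply setLIntegral_mono measurable_const
          intro y hy
          simp only [Set.mem_Iic] at hy
          rw [← ENNReal.ofReal_one]
          apply ENNReal.ofReal_le_ofReal
          rw [← Real.exp_zero]
          exact Real.exp_le_exp.mpr (by nlinarith)
      _ = μ (Set.Iic 0) := by rw [setLIntegral_one]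
      _ ≤ μ Set.univ := measure_mono (Set.subset_univ _)
  -- part 2 : sum over intervals
  set t : ℕ → ℝ := fun n => (μ (Set.Ioi (n:ℝ))).toReal with ht
  have htnonneg : ∀ n, 0 ≤ t n := fun n => ENNReal.toReal_nonneg
  set u : ℕ → ℝ := fun n => Real.exp (b * (n + 1)) * t n with hu
  have hun : ∀ n, 0 ≤ u n := fun n => mul_nonneg (Real.exp_pos _).le (htnonneg n)
  have hpiece : ∀ n : ℕ, ∫⁻ y in Set.Ioc (n:ℝ) (n+1), ENNReal.ofReal (Real.exp (b * y)) ∂μ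
      ≤ ENNReal.ofReal (u n) := by
    intro n
    calc ∫⁻ y in Set.Ioc (n:ℝ) (n+1), ENNReal.ofReal (Real.exp (b * y)) ∂μ
        ≤ ∫⁻ _ in Set.Ioc (n:ℝ) (n+1), ENNReal.ofReal (Real.exp (b * (n+1))) ∂μ := by
          apply setLIntegral_mono measurable_const
          intro y hy
          simp only [Set.mem_Ioc] at hy
          exact ENNReal.ofReal_le_ofReal (Real.exp_le_exp.mpr (by nlinarith [hy.2]))
      _ = ENNReal.ofReal (Real.exp (b * (n+1))) * μ (Set.Ioc (n:ℝ) (n+1)) := by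
          rw [setLIntegral_const]
      _ ≤ ENNReal.ofReal (Real.exp (b * (n+1))) * μ (Set.Ioi (n:ℝ)) := by
          apply mul_le_mul_right
          exact measure_mono Set.Ioc_subset_Ioi_self
      _ = ENNReal.ofReal (u n) := by
          rw [hu]
          rw [ENNReal.ofReal_mul (Real.exp_pos _).le]
          congr 1
          rw [ht]
          simp [ENNReal.ofReal_toReal (measure_ne_top μ _)]
  have hsummable : Summable u := by
    set N : ℕ := ⌈s0⌉₊ with hN
    rw [← summable_nat_add_iff N]
    have hbound : ∀ n : ℕ, u (n + N) ≤ C * Real.exp b * ((n + N : ℕ) : ℝ) ^ c := by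
      intro n
      have hs : s0 ≤ ((n + N : ℕ) : ℝ) := by
        have h1 : s0 ≤ (N : ℝ) := Nat.le_ceil s0
        have : (N:ℝ) ≤ ((n + N : ℕ):ℝ) := by exact_mod_cast Nat.le_add_left N n
        linarith
      have htle : t (n + N) ≤ C * ((n + N : ℕ):ℝ) ^ c * Real.exp (-b * ((n + N : ℕ):ℝ)) := by
        apply ENNReal.toReal_le_of_le_ofReal
        · have hpos : (0:ℝ) < ((n + N:ℕ):ℝ) := by linarith
          positivity
        · exact htail _ hs
      calc u (n + N) = Real.exp (b * (((n + N:ℕ):ℝ) + 1)) * t (n + N) := rfl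
        _ ≤ Real.exp (b * (((n + N:ℕ):ℝ) + 1)) * (C * ((n + N : ℕ):ℝ) ^ c * Real.exp (-b * ((n + N : ℕ):ℝ))) :=
            mul_le_mul_of_nonneg_left htle (Real.exp_pos _).le
        _ = C * Real.exp b * ((n + N : ℕ) : ℝ) ^ c := by
            rw [show b * (((n + N:ℕ):ℝ) + 1) = b * ((n + N:ℕ):ℝ) + b by ring, Real.exp_add]
            rw [show -b * ((n + N:ℕ):ℝ) = -(b * ((n + N:ℕ):ℝ)) by ring, Real.exp_neg]
            have := Real.exp_pos (b * ((n + N:ℕ):ℝ))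
            field_simp
    apply Summable.of_nonneg_of_le (fun n => hun (n + N)) hbound
    have hsum0 : Summable (fun n : ℕ => ((n:ℝ)) ^ c) := Real.summable_nat_rpow.mpr hc
    have hsum1 : Summable (fun n : ℕ => (((n + N:ℕ)):ℝ) ^ c) :=
      (summable_nat_add_iff (f := fun n : ℕ => ((n:ℝ)) ^ c) N).mpr hsum0
    exact hsum1.mul_left _
  have hpart2 : ∫⁻ y in Set.Ioi 0, ENNReal.ofReal (Real.exp (b * y)) ∂μ
      ≤ ENNReal.ofReal (∑' n, u n) := by
    rw [Ioi_eq_iUnion, lintegral_iUnion (fun n => measurableSet_Ioc) Ioc_pairwise_disjoint]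
    calc ∑' n : ℕ, ∫⁻ y in Set.Ioc (n:ℝ) ((n:ℝ)+1), ENNReal.ofReal (Real.exp (b * y)) ∂μ
        ≤ ∑' n, ENNReal.ofReal (u n) := ENNReal.tsum_le_tsum hpiece
      _ = ENNReal.ofReal (∑' n, u n) := (ENNReal.ofReal_tsum_of_nonneg hun hsummable).symm
  calc (∫⁻ y in Set.Iic 0, ENNReal.ofReal (Real.exp (b * y)) ∂μ)
        + ∫⁻ y in Set.Ioi 0, ENNReal.ofReal (Real.exp (b * y)) ∂μ
      ≤ μ Set.univ + ENNReal.ofReal (∑' n, u n) := add_le_add hpart1 hpart2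
    _ < ⊤ := by
        apply ENNReal.add_lt_top.mpr
        exact ⟨measure_lt_top μ _, ENNReal.ofReal_lt_top⟩

end Stmt14Aux3

open Stmt14Aux Stmt14Aux2 Stmt14Aux3

set_option maxHeartbeats 1000000 in
theorem stmt_14
    {Ω : Type*} [MeasureSpace Ω] [IsProbabilityMeasure (ℙ : Measure Ω)]
    (A B Y : Ω → ℝ)
    (hA : Measurable A) (hB : Measurable B) (hY : Measurable Y)
    (hA01 : ℙ {ω | A ω ∈ Set.Ioc (0 : ℝ) 1} = 1)
    (a b c : ℝ) (ha : 0 < a) (hb : 0 < b) (hc : c < -1)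
    (hBtail : Tendsto (fun x : ℝ =>
      (ℙ {ω | B ω > x}).toReal / (a * x ^ c * Real.exp (-b * x))) atTop (nhds 1))
    (f : ℝ → ℝ) (hf : Measurable f) (hf0 : ∀ y, 0 ≤ f y)
    (htailAB : ∀ y : ℝ, Tendsto (fun x : ℝ =>
      (ℙ {ω | A ω * y + B ω > x}).toReal / (ℙ {ω | B ω > x}).toReal)
      atTop (nhds (f y)))
    (hmomB : ∫⁻ ω in {ω | A ω = 1}, ENNReal.ofReal (Real.exp (b * B ω)) ∂ℙ < 1)
    (hYindep : IndepFun (fun ω => (A ω, B ω)) Y ℙ)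
    (cY : ℝ) (hcY : 0 < cY)
    (hYtail : Tendsto (fun x : ℝ =>
      (ℙ {ω | Y ω > x}).toReal / (ℙ {ω | B ω > x}).toReal) atTop (nhds cY)) :
    (∫⁻ ω, ENNReal.ofReal (f (Y ω)) ∂ℙ < ⊤) ∧
    Tendsto (fun x : ℝ =>
        (ℙ {ω | A ω * Y ω + B ω > x}).toReal / (ℙ {ω | B ω > x}).toReal)
      atTop (nhds
        (cY * (∫⁻ ω in {ω | A ω = 1}, ENNReal.ofReal (Real.exp (b * B ω)) ∂ℙ).toReal +
          (∫⁻ ω, ENNReal.ofReal (f (Y ω)) ∂ℙ).toReal)) := by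
  have hcneg : c < 0 := by linarith
  -- tail functions
  set g : ℝ → ℝ := fun x => (ℙ {ω | B ω > x}).toReal with hgdef
  set h : ℝ → ℝ := fun x => (ℙ {ω | Y ω > x}).toReal with hhdef
  have hBset : ∀ x : ℝ, MeasurableSet {ω | B ω > x} := fun x =>
    measurableSet_lt measurable_const hB
  have hYset : ∀ x : ℝ, MeasurableSet {ω | Y ω > x} := fun x =>
    measurableSet_lt measurable_const hY
  have hganti : Antitone g := by
    intro x y hxy
    apply ENNReal.toReal_mono (measure_ne_top _ _)
    exact measure_mono (fun ω hω => lt_of_le_of_lt hxy hω)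
  have hhanti : Antitone h := by
    intro x y hxy
    apply ENNReal.toReal_mono (measure_ne_top _ _)
    exact measure_mono (fun ω hω => lt_of_le_of_lt hxy hω)
  have hg1 : ∀ x, g x ≤ 1 := fun x => by
    rw [hgdef]
    simp only
    rw [← ENNReal.toReal_one]
    exact ENNReal.toReal_mono ENNReal.one_ne_top prob_le_one
  have hh1 : ∀ x, h x ≤ 1 := fun x => by
    rw [hhdef]
    simp only
    rw [← ENNReal.toReal_one]
    exact ENNReal.toReal_mono ENNReal.one_ne_top prob_le_one
  have hgφ : Tendsto (fun x => g x / phi a b c x) atTop (nhds 1) := hBtail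
  have gpos : ∀ x, 0 < g x := tail_pos ha one_pos hganti hgφ
  have hhφ : Tendsto (fun x => h x / phi a b c x) atTop (nhds cY) := by
    have heq : (fun x => h x / phi a b c x) = fun x => (h x / g x) * (g x / phi a b c x) := by
      funext x
      rw [div_mul_div_comm, mul_comm (g x), mul_div_mul_right _ _ (gpos x).ne']
    rw [heq]
    simpa using hYtail.mul hgφ
  have hpos : ∀ x, 0 < h x := tail_pos ha hcY hhanti hhφ
  have hGofReal : ∀ x, ℙ {ω | B ω > x} = ENNReal.ofReal (g x) := fun x =>
    (ENNReal.ofReal_toReal (measure_ne_top _ _)).symm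
  have hHofReal : ∀ x, ℙ {ω | Y ω > x} = ENNReal.ofReal (h x) := fun x =>
    (ENNReal.ofReal_toReal (measure_ne_top _ _)).symm
  -- measures
  set μ : Measure ℝ := Measure.map Y ℙ with hμdef
  set ν : Measure (ℝ × ℝ) := Measure.map (fun ω => (A ω, B ω)) ℙ with hνdef
  have hABmeas : Measurable (fun ω => (A ω, B ω)) := hA.prodMk hB
  haveI : IsProbabilityMeasure μ := Measure.isProbabilityMeasure_map hY.aemeasurable
  haveI : IsProbabilityMeasure ν := Measure.isProbabilityMeasure_map hABmeas.aemeasurable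
  have hmap : Measure.map (fun ω => ((A ω, B ω), Y ω)) ℙ = ν.prod μ :=
    (ProbabilityTheory.indepFun_iff_map_prod_eq_prod_map_map hABmeas.aemeasurable
      hY.aemeasurable).mp hYindep
  have hAae : ∀ᵐ ω ∂ℙ, 0 < A ω ∧ A ω ≤ 1 := by
    have hs : MeasurableSet {ω | A ω ∈ Set.Ioc (0:ℝ) 1} := hA measurableSet_Ioc
    have h0 : ℙ {ω | A ω ∈ Set.Ioc (0:ℝ) 1}ᶜ = 0 := (prob_compl_eq_zero_iff hs).mpr hA01
    have h1 : ∀ᵐ ω ∂ℙ, A ω ∈ Set.Ioc (0:ℝ) 1 := by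
      have hset : {ω | ¬ A ω ∈ Set.Ioc (0:ℝ) 1} = {ω | A ω ∈ Set.Ioc (0:ℝ) 1}ᶜ := rfl
      rw [MeasureTheory.ae_iff, hset]
      exact h0
    filter_upwards [h1] with ω hω
    exact ⟨hω.1, hω.2⟩
  have hνae : ∀ᵐ p ∂ν, 0 < p.1 ∧ p.1 ≤ 1 := by
    have hS : MeasurableSet {p : ℝ × ℝ | 0 < p.1 ∧ p.1 ≤ 1} :=
      (measurableSet_lt measurable_const measurable_fst).inter
        (measurableSet_le measurable_fst measurable_const)
    rw [hνdef]
    rw [(MeasureTheory.ae_map_iff hABmeas.aemeasurable hS : _)]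
    exact hAae
  have hμtail : ∀ u : ℝ, μ (Set.Ioi u) = ℙ {ω | Y ω > u} := by
    intro u
    rw [hμdef, Measure.map_apply hY measurableSet_Ioi]
    rfl
  -- moments
  obtain ⟨x0g, hx0g1, hsg⟩ := tail_sandwich ha one_pos hgφ
  obtain ⟨x0h, hx0h1, hsh⟩ := tail_sandwich ha hcY hhφ
  have hEB : ∫⁻ ω, ENNReal.ofReal (Real.exp (b * B ω)) ∂ℙ < ⊤ := by
    have hmexp : Measurable fun y : ℝ => ENNReal.ofReal (Real.exp (b * y)) :=
      (Real.continuous_exp.comp (continuous_const.mul continuous_id)).measurable.ennreal_ofReal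
    have hrw : ∫⁻ ω, ENNReal.ofReal (Real.exp (b * B ω)) ∂ℙ
        = ∫⁻ y, ENNReal.ofReal (Real.exp (b * y)) ∂(Measure.map B ℙ) :=
      (lintegral_map hmexp hB).symm
    rw [hrw]
    apply exp_moment_fin (Measure.map B ℙ) hb hc (by positivity : (0:ℝ) ≤ 2 * a) hx0g1
    intro s hs
    rw [Measure.map_apply hB measurableSet_Ioi]
    have : B ⁻¹' Set.Ioi s = {ω | B ω > s} := rfl
    rw [this, hGofReal s]
    apply ENNReal.ofReal_le_ofReal
    calc g s ≤ 2 * 1 * phi a b c s := (hsg s hs).2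
      _ = 2 * a * s ^ c * Real.exp (-b * s) := by unfold phi; ring
  have hEY : ∫⁻ y, ENNReal.ofReal (Real.exp (b * y)) ∂μ < ⊤ := by
    apply exp_moment_fin μ hb hc (by positivity : (0:ℝ) ≤ 2 * cY * a) hx0h1
    intro s hs
    rw [hμtail s, hHofReal s]
    apply ENNReal.ofReal_le_ofReal
    calc h s ≤ 2 * cY * phi a b c s := (hsh s hs).2
      _ = 2 * cY * a * s ^ c * Real.exp (-b * s) := by unfold phi; ring
  have hEYplus : ∫⁻ y, ENNReal.ofReal (Real.exp (b * max y 0)) ∂μ < ⊤ := by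
    have hmexp : Measurable fun y : ℝ => ENNReal.ofReal (Real.exp (b * y)) :=
      (Real.continuous_exp.comp (continuous_const.mul continuous_id)).measurable.ennreal_ofReal
    have hble : ∀ y : ℝ, ENNReal.ofReal (Real.exp (b * max y 0))
        ≤ 1 + ENNReal.ofReal (Real.exp (b * y)) := by
      intro y
      rcases le_or_gt 0 y with hy | hy
      · rw [max_eq_left hy]
        exact le_add_self
      · rw [max_eq_right hy.le, mul_zero, Real.exp_zero, ENNReal.ofReal_one]
        exact le_add_of_nonneg_right zero_le
    calc ∫⁻ y, ENNReal.ofReal (Real.exp (b * max y 0)) ∂μ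
        ≤ ∫⁻ y, (1 + ENNReal.ofReal (Real.exp (b * y))) ∂μ := lintegral_mono hble
      _ = 1 * μ Set.univ + ∫⁻ y, ENNReal.ofReal (Real.exp (b * y)) ∂μ := by
          rw [lintegral_add_left measurable_const, lintegral_const]
      _ < ⊤ := by
          apply ENNReal.add_lt_top.mpr
          constructor
          · simp
          · exact hEY
  -- pointwise bound on f
  have hfb : ∀ y, f y ≤ Real.exp (b * max y 0) := by
    intro y
    have hcross := tail_cross ha one_ne_zero hgφ hgφ (max y 0)
    simp only [one_mul, div_one] at hcross
    refine le_of_tendsto_of_tendsto (htailAB y) hcross (Eventually.of_forall fun x => ?_)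
    have hmono : ℙ {ω | A ω * y + B ω > x} ≤ ℙ {ω | B ω > x - max y 0} := by
      apply measure_mono_ae
      filter_upwards [hAae] with ω hω hx
      have hAy : A ω * y ≤ max y 0 := by
        rcases le_or_gt 0 y with hy | hy
        · calc A ω * y ≤ 1 * y := mul_le_mul_of_nonneg_right hω.2 hy
            _ = y := one_mul y
            _ ≤ max y 0 := le_max_left _ _
        · calc A ω * y ≤ 0 := mul_nonpos_of_nonneg_of_nonpos hω.1.le hy.le
            _ ≤ max y 0 := le_max_right _ _
      have hx' : A ω * y + B ω > x := hx
      show B ω > x - max y 0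
      linarith
    have hle : (ℙ {ω | A ω * y + B ω > x}).toReal ≤ g (x - max y 0) :=
      ENNReal.toReal_mono (measure_ne_top _ _) hmono
    simp only [Pi.div_apply]
    gcongr
  -- part 1
  have hlfY : ∫⁻ ω, ENNReal.ofReal (f (Y ω)) ∂ℙ = ∫⁻ y, ENNReal.ofReal (f y) ∂μ := by
    rw [hμdef, lintegral_map (hf.ennreal_ofReal) hY]
  have part1 : ∫⁻ ω, ENNReal.ofReal (f (Y ω)) ∂ℙ < ⊤ := by
    rw [hlfY]
    refine lt_of_le_of_lt (lintegral_mono fun y => ?_) hEYplus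
    exact ENNReal.ofReal_le_ofReal (hfb y)
  refine ⟨part1, ?_⟩
  -- the limit constants
  set I : ℝ := (∫⁻ ω, ENNReal.ofReal (f (Y ω)) ∂ℙ).toReal with hIdef
  have hIeq : I = ∫ y, f y ∂μ := by
    rw [hIdef, hlfY]
    rw [MeasureTheory.integral_eq_lintegral_of_nonneg_ae (Eventually.of_forall hf0)
      hf.aestronglyMeasurable]
  -- generic limit for the (Y large, A ∈ S) term
  have hVlim : ∀ S : Set ℝ, MeasurableSet S →
      Tendsto (fun x => (ℙ {ω | Y ω + B ω > x ∧ Y ω > x/2 ∧ A ω ∈ S}).toReal / g x) atTop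
        (nhds (cY * (∫⁻ ω in A ⁻¹' S, ENNReal.ofReal (Real.exp (b * B ω)) ∂ℙ).toReal)) := by
    intro S hS
    classical
    obtain ⟨K, x1, hK0, hx10, hKb⟩ := tail_unif ha hb hcneg one_pos hcY hhanti hgφ hhφ
    set Rx : ℝ → Set ((ℝ × ℝ) × ℝ) := fun x =>
      {q | q.2 + q.1.2 > x ∧ q.2 > x/2 ∧ q.1.1 ∈ S} with hRx
    have hRxm : ∀ x, MeasurableSet (Rx x) := by
      intro x
      refine (measurableSet_lt measurable_const
          (measurable_snd.add (measurable_snd.comp measurable_fst))).inter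
        ((measurableSet_lt measurable_const measurable_snd).inter ?_)
      exact (measurable_fst.comp measurable_fst) hS
    have hprodV : ∀ x, ℙ {ω | Y ω + B ω > x ∧ Y ω > x/2 ∧ A ω ∈ S} = (ν.prod μ) (Rx x) := by
      intro x
      rw [← hmap, Measure.map_apply (hABmeas.prodMk hY) (hRxm x)]
      rfl
    set v : ℝ → ℝ × ℝ → ℝ := fun x p => (μ (Prod.mk p ⁻¹' Rx x)).toReal / g x with hv
    set φS : ℝ × ℝ → ℝ := fun p => if p.1 ∈ S then cY * Real.exp (b * p.2) else 0 with hφS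
    have hslicem : ∀ x, Measurable fun p : ℝ × ℝ => μ (Prod.mk p ⁻¹' Rx x) :=
      fun x => measurable_measure_prodMk_left (hRxm x)
    have hμslice : ∀ x (p : ℝ × ℝ), p.1 ∈ S →
        Prod.mk p ⁻¹' Rx x = {y : ℝ | y + p.2 > x ∧ y > x/2} := by
      intro x p hp
      ext y
      simp only [Set.mem_preimage, hRx, Set.mem_setOf_eq]
      tauto
    have hμsliceN : ∀ x (p : ℝ × ℝ), p.1 ∉ S → Prod.mk p ⁻¹' Rx x = ∅ := by
      intro x p hp
      ext y
      simp only [Set.mem_preimage, hRx, Set.mem_setOf_eq, Set.mem_empty_iff_false, iff_false]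
      tauto
    have hIoi : ∀ u : ℝ, μ (Set.Ioi u) = ENNReal.ofReal (h u) := by
      intro u
      rw [hμtail u, hHofReal u]
    have hiden : ∀ x, (ℙ {ω | Y ω + B ω > x ∧ Y ω > x/2 ∧ A ω ∈ S}).toReal / g x
        = ∫ p, v x p ∂ν := by
      intro x
      rw [hprodV x, Measure.prod_apply (hRxm x)]
      rw [integral_div]
      congr 1
      rw [← integral_toReal (hslicem x).aemeasurable]
      filter_upwards with p
      exact lt_of_le_of_lt prob_le_one ENNReal.one_lt_top
    simp only [hiden]
    -- identify the limit
    have hlimval : ∫ p, φS p ∂ν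
        = cY * (∫⁻ ω in A ⁻¹' S, ENNReal.ofReal (Real.exp (b * B ω)) ∂ℙ).toReal := by
      have hindic : φS = Set.indicator (S ×ˢ (Set.univ : Set ℝ))
          (fun p => cY * Real.exp (b * p.2)) := by
        funext p
        simp only [hφS, Set.indicator_apply]
        by_cases hp : p.1 ∈ S
        · rw [if_pos hp, if_pos (show p ∈ S ×ˢ (Set.univ : Set ℝ) by simp [Set.mem_prod, hp])]
        · rw [if_neg hp, if_neg (show p ∉ S ×ˢ (Set.univ : Set ℝ) by simp [Set.mem_prod, hp])]
      rw [hindic, integral_indicator (hS.prod MeasurableSet.univ)]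
      rw [integral_const_mul]
      congr 1
      have hpre : (fun ω => (A ω, B ω)) ⁻¹' (S ×ˢ (Set.univ : Set ℝ)) = A ⁻¹' S := by
        ext ω
        simp [Set.mem_prod]
      have hrestr : ν.restrict (S ×ˢ (Set.univ : Set ℝ))
          = Measure.map (fun ω => (A ω, B ω)) ((ℙ : Measure Ω).restrict (A ⁻¹' S)) := by
        rw [hνdef, Measure.restrict_map hABmeas (hS.prod MeasurableSet.univ), hpre]
      rw [MeasureTheory.integral_eq_lintegral_of_nonneg_ae
        (Eventually.of_forall fun p => (Real.exp_pos _).le)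
        (Real.measurable_exp.comp (measurable_const.mul measurable_snd) :
          Measurable fun p : ℝ × ℝ => Real.exp (b * p.2)).aestronglyMeasurable]
      congr 1
      rw [hrestr, lintegral_map (f := fun p : ℝ × ℝ => ENNReal.ofReal (Real.exp (b * p.2)))
        ((Real.measurable_exp.comp (measurable_const.mul measurable_snd)).ennreal_ofReal)
        hABmeas]
    rw [← hlimval]
    apply MeasureTheory.tendsto_integral_filter_of_dominated_convergence
      (bound := fun p : ℝ × ℝ => K * (1 + Real.exp (b * p.2)))
    · filter_upwards with x
      exact (((hslicem x).ennreal_toReal).div_const (g x)).aestronglyMeasurable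
    · filter_upwards [eventually_ge_atTop x1, eventually_ge_atTop 0] with x hx1 hx0
      filter_upwards with p
      have hnn : 0 ≤ v x p := div_nonneg ENNReal.toReal_nonneg (gpos x).le
      rw [Real.norm_eq_abs, abs_of_nonneg hnn]
      set t : ℝ := p.2 with htdef
      have hexp_le : Real.exp (b * max t 0) ≤ 1 + Real.exp (b * t) := by
        rcases le_or_gt 0 t with ht | ht
        · rw [max_eq_left ht]; linarith
        · rw [max_eq_right ht.le, mul_zero, Real.exp_zero]
          linarith [Real.exp_pos (b * t)]
      have hsub : μ (Prod.mk p ⁻¹' Rx x) ≤ ENNReal.ofReal (h (max (x - t) (x/2))) := by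
        rw [← hIoi]
        apply measure_mono
        intro y hy
        simp only [Set.mem_preimage, hRx, Set.mem_setOf_eq] at hy
        obtain ⟨h1, h2, -⟩ := hy
        simp only [Set.mem_Ioi]
        exact max_lt (by linarith) h2
      have h1 : (μ (Prod.mk p ⁻¹' Rx x)).toReal ≤ h (max (x - t) (x/2)) :=
        ENNReal.toReal_le_of_le_ofReal (hpos _).le hsub
      have h2 : h (max (x - t) (x/2)) ≤ K * (1 + Real.exp (b * t)) * g x := by
        rcases le_or_gt t (x/2) with ht | ht
        · have hmx : max (x - t) (x/2) = x - t := max_eq_left (by linarith)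
          rw [hmx]
          calc h (x - t) ≤ K * Real.exp (b * max t 0) * g x := hKb x hx1 t ht
            _ ≤ K * (1 + Real.exp (b * t)) * g x :=
                mul_le_mul_of_nonneg_right
                  (mul_le_mul_of_nonneg_left hexp_le hK0.le) (gpos x).le
        · have hmx : max (x - t) (x/2) = x/2 := max_eq_right (by linarith)
          rw [hmx]
          have hx2 : h (x - x/2) ≤ K * Real.exp (b * max (x/2) 0) * g x := hKb x hx1 (x/2) le_rfl
          rw [show x - x/2 = x/2 by ring, max_eq_left (by linarith : (0:ℝ) ≤ x/2)] at hx2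
          calc h (x/2) ≤ K * Real.exp (b * (x/2)) * g x := hx2
            _ ≤ K * (1 + Real.exp (b * t)) * g x := by
                apply mul_le_mul_of_nonneg_right ?_ (gpos x).le
                apply mul_le_mul_of_nonneg_left ?_ hK0.le
                have hee : Real.exp (b * (x/2)) ≤ Real.exp (b * t) :=
                  Real.exp_le_exp.mpr (mul_le_mul_of_nonneg_left ht.le hb.le)
                linarith
      have hvp : v x p = (μ (Prod.mk p ⁻¹' Rx x)).toReal / g x := rfl
      rw [hvp, div_le_iff₀ (gpos x)]
      exact le_trans h1 h2
    · -- integrability of the bound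
      have hbm : Measurable fun p : ℝ × ℝ => K * (1 + Real.exp (b * p.2)) :=
        measurable_const.mul (measurable_const.add
          (Real.measurable_exp.comp (measurable_const.mul measurable_snd)))
      refine ⟨hbm.aestronglyMeasurable, ?_⟩
      rw [hasFiniteIntegral_iff_ofReal (Eventually.of_forall fun p => by positivity)]
      have hEBν : ∫⁻ p : ℝ × ℝ, ENNReal.ofReal (Real.exp (b * p.2)) ∂ν
          = ∫⁻ ω, ENNReal.ofReal (Real.exp (b * B ω)) ∂ℙ := by
        rw [hνdef, lintegral_map (f := fun p : ℝ × ℝ => ENNReal.ofReal (Real.exp (b * p.2)))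
          ((Real.measurable_exp.comp (measurable_const.mul measurable_snd)).ennreal_ofReal)
          hABmeas]
      calc ∫⁻ p : ℝ × ℝ, ENNReal.ofReal (K * (1 + Real.exp (b * p.2))) ∂ν
          = ENNReal.ofReal K * ∫⁻ p : ℝ × ℝ, (1 + ENNReal.ofReal (Real.exp (b * p.2))) ∂ν := by
            rw [← lintegral_const_mul' _ _ ENNReal.ofReal_ne_top]
            apply lintegral_congr fun p => ?_
            rw [ENNReal.ofReal_mul hK0.le]
            congr 1
            rw [ENNReal.ofReal_add zero_le_one (Real.exp_pos _).le, ENNReal.ofReal_one]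
        _ = ENNReal.ofReal K * (1 * ν Set.univ
              + ∫⁻ p : ℝ × ℝ, ENNReal.ofReal (Real.exp (b * p.2)) ∂ν) := by
            rw [lintegral_add_left measurable_const, lintegral_const]
        _ < ⊤ := by
            apply ENNReal.mul_lt_top ENNReal.ofReal_lt_top
            apply ENNReal.add_lt_top.mpr
            constructor
            · simp
            · rw [hEBν]; exact hEB
    · -- pointwise convergence
      filter_upwards with p
      by_cases hp : p.1 ∈ S
      · have heq : ∀ᶠ x in atTop, v x p = h (x - p.2) / g x := by
          filter_upwards [eventually_ge_atTop (2 * p.2)] with x hx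
          have hset : Prod.mk p ⁻¹' Rx x = Set.Ioi (x - p.2) := by
            rw [hμslice x p hp]
            ext y
            simp only [Set.mem_setOf_eq, Set.mem_Ioi]
            constructor
            · rintro ⟨h1, -⟩; linarith
            · intro h1; constructor <;> [linarith; linarith]
          rw [hv]
          simp only [hset, hIoi, ENNReal.toReal_ofReal (hpos _).le]
        rw [tendsto_congr' heq]
        have := tail_cross ha one_ne_zero hgφ hhφ p.2
        simp only [div_one] at this
        have hφSp : φS p = cY * Real.exp (b * p.2) := by rw [hφS]; simp [hp]
        rw [hφSp]
        exact this
      · have heq : ∀ x, v x p = 0 := by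
          intro x
          rw [hv]
          simp [hμsliceN x p hp]
        have hφSp : φS p = 0 := by rw [hφS]; simp [hp]
        rw [hφSp]
        simp only [heq]
        exact tendsto_const_nhds
  -- the (Y moderate) term
  have hUlim : Tendsto (fun x => (ℙ {ω | A ω * Y ω + B ω > x ∧ Y ω ≤ x/2}).toReal / g x)
      atTop (nhds I) := by
    obtain ⟨K, x1, hK0, hx10, hKb⟩ := tail_unif ha hb hcneg one_pos one_pos hganti hgφ hgφ
    set Tx : ℝ → Set ((ℝ × ℝ) × ℝ) := fun x =>
      {q | q.1.1 * q.2 + q.1.2 > x ∧ q.2 ≤ x/2} with hTx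
    have hTxm : ∀ x, MeasurableSet (Tx x) := by
      intro x
      exact (measurableSet_lt measurable_const
          (((measurable_fst.comp measurable_fst).mul measurable_snd).add
            (measurable_snd.comp measurable_fst))).inter
        (measurableSet_le measurable_snd measurable_const)
    have hprodU : ∀ x, ℙ {ω | A ω * Y ω + B ω > x ∧ Y ω ≤ x/2} = (ν.prod μ) (Tx x) := by
      intro x
      rw [← hmap, Measure.map_apply (hABmeas.prodMk hY) (hTxm x)]
      rfl
    set u : ℝ → ℝ → ℝ := fun x y => (ν ((fun p : ℝ × ℝ => (p, y)) ⁻¹' Tx x)).toReal / g x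
      with hu
    have hslicem : ∀ x, Measurable fun y => ν ((fun p : ℝ × ℝ => (p, y)) ⁻¹' Tx x) :=
      fun x => measurable_measure_prodMk_right (hTxm x)
    have hiden : ∀ x, (ℙ {ω | A ω * Y ω + B ω > x ∧ Y ω ≤ x/2}).toReal / g x
        = ∫ y, u x y ∂μ := by
      intro x
      rw [hprodU x, Measure.prod_apply_symm (hTxm x)]
      rw [integral_div]
      congr 1
      rw [← integral_toReal (hslicem x).aemeasurable]
      filter_upwards with y
      exact lt_of_le_of_lt prob_le_one ENNReal.one_lt_top
    simp only [hiden]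
    rw [hIeq]
    apply MeasureTheory.tendsto_integral_filter_of_dominated_convergence
      (bound := fun y => K * Real.exp (b * max y 0))
    · filter_upwards with x
      exact (((hslicem x).ennreal_toReal).div_const (g x)).aestronglyMeasurable
    · filter_upwards [eventually_ge_atTop x1, eventually_ge_atTop 0] with x hx1 hx0
      filter_upwards with y
      have hnn : 0 ≤ u x y := div_nonneg ENNReal.toReal_nonneg (gpos x).le
      rw [Real.norm_eq_abs, abs_of_nonneg hnn]
      rcases le_or_gt y (x/2) with hy | hy
      · -- slice ⊆ tail set
        have hsub : ν ((fun p : ℝ × ℝ => (p, y)) ⁻¹' Tx x)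
            ≤ ν {p : ℝ × ℝ | p.2 > x - max y 0} := by
          apply measure_mono_ae
          show ∀ᵐ p ∂ν, p ∈ (fun p : ℝ × ℝ => (p, y)) ⁻¹' Tx x →
            p ∈ {p : ℝ × ℝ | p.2 > x - max y 0}
          filter_upwards [hνae] with p hp hmem
          obtain ⟨hgt, -⟩ := hmem
          have hAy : p.1 * y ≤ max y 0 := by
            rcases le_or_gt 0 y with hy' | hy'
            · calc p.1 * y ≤ 1 * y := mul_le_mul_of_nonneg_right hp.2 hy'
                _ = y := one_mul y
                _ ≤ max y 0 := le_max_left _ _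
            · calc p.1 * y ≤ 0 := mul_nonpos_of_nonneg_of_nonpos hp.1.le hy'.le
                _ ≤ max y 0 := le_max_right _ _
          have hgt' : p.1 * y + p.2 > x := hgt
          show p.2 > x - max y 0
          linarith
        have hGid : ν {p : ℝ × ℝ | p.2 > x - max y 0} = ℙ {ω | B ω > x - max y 0} := by
          rw [hνdef, Measure.map_apply hABmeas
            (measurableSet_lt measurable_const measurable_snd)]
          rfl
        have h1 : (ν ((fun p : ℝ × ℝ => (p, y)) ⁻¹' Tx x)).toReal ≤ g (x - max y 0) := by
          have h3 := ENNReal.toReal_mono (measure_ne_top ν _) hsub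
          rwa [hGid] at h3
        have h2 : g (x - max y 0) ≤ K * Real.exp (b * max (max y 0) 0) * g x :=
          hKb x hx1 (max y 0) (by
            rcases le_or_gt 0 y with hy' | hy'
            · rw [max_eq_left hy']; exact hy
            · rw [max_eq_right hy'.le]; linarith)
        have hmm : max (max y 0) 0 = max y 0 := max_eq_left (le_max_right y 0)
        rw [hmm] at h2
        rw [hu]
        rw [div_le_iff₀ (gpos x)]
        exact le_trans h1 h2
      · have hempty : (fun p : ℝ × ℝ => (p, y)) ⁻¹' Tx x = ∅ := by
          ext p
          simp only [Set.mem_preimage, hTx, Set.mem_setOf_eq, Set.mem_empty_iff_false,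
            iff_false, not_and]
          intro _
          exact not_le.mpr hy
        rw [hu]
        simp only [hempty, measure_empty, ENNReal.toReal_zero, zero_div]
        positivity
    · -- integrability of the bound
      have hbm : Measurable fun y : ℝ => K * Real.exp (b * max y 0) :=
        measurable_const.mul (Real.measurable_exp.comp
          (measurable_const.mul (measurable_id.max measurable_const)))
      refine ⟨hbm.aestronglyMeasurable, ?_⟩
      rw [hasFiniteIntegral_iff_ofReal (Eventually.of_forall fun y => by positivity)]
      have hofr : ∀ y : ℝ, ENNReal.ofReal (K * Real.exp (b * max y 0))
          = ENNReal.ofReal K * ENNReal.ofReal (Real.exp (b * max y 0)) := fun y =>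
        ENNReal.ofReal_mul hK0.le
      calc ∫⁻ y, ENNReal.ofReal (K * Real.exp (b * max y 0)) ∂μ
          = ENNReal.ofReal K * ∫⁻ y, ENNReal.ofReal (Real.exp (b * max y 0)) ∂μ := by
            rw [← lintegral_const_mul' _ _ ENNReal.ofReal_ne_top]
            exact lintegral_congr fun y => hofr y
        _ < ⊤ := ENNReal.mul_lt_top ENNReal.ofReal_lt_top hEYplus
    · -- pointwise convergence
      filter_upwards with y
      have heq : ∀ᶠ x in atTop, u x y = (ℙ {ω | A ω * y + B ω > x}).toReal / g x := by
        filter_upwards [eventually_ge_atTop (2*y)] with x hx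
        have hset : (fun p : ℝ × ℝ => (p, y)) ⁻¹' Tx x = {p : ℝ × ℝ | p.1 * y + p.2 > x} := by
          ext p
          simp only [Set.mem_preimage, hTx, Set.mem_setOf_eq]
          exact and_iff_left (by linarith)
        have hFid : ν {p : ℝ × ℝ | p.1 * y + p.2 > x} = ℙ {ω | A ω * y + B ω > x} := by
          rw [hνdef, Measure.map_apply hABmeas
            (measurableSet_lt measurable_const ((measurable_fst.mul measurable_const).add
              measurable_snd) : MeasurableSet {p : ℝ × ℝ | p.1 * y + p.2 > x})]
          rfl
        rw [hu]
        simp only [hset, hFid]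
      rw [tendsto_congr' heq]
      exact htailAB y
  -- the (Y large, A ≤ 1 - δ) term
  have hDlim : ∀ δ : ℝ, 0 < δ → δ < 1 →
      Tendsto (fun x => (ℙ {ω | A ω * Y ω + B ω > x ∧ Y ω > x/2 ∧ A ω ≤ 1-δ}).toReal / g x)
        atTop (nhds 0) := by
    intro δ hδ0 hδ1
    obtain ⟨CG, hCG0, hCG⟩ := tail_global ha hb hcneg one_pos hganti hg1 hgφ
    set MY : ℝ := (∫⁻ y, ENNReal.ofReal (Real.exp (b * max y 0)) ∂μ).toReal with hMY
    have hMY0 : 0 ≤ MY := ENNReal.toReal_nonneg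
    -- the event as a product set
    set Sx : ℝ → Set ((ℝ × ℝ) × ℝ) := fun x =>
      {q | q.1.1 * q.2 + q.1.2 > x ∧ q.2 > x/2 ∧ q.1.1 ≤ 1-δ} with hSx
    have hSxm : ∀ x, MeasurableSet (Sx x) := by
      intro x
      apply MeasurableSet.inter
      · exact measurableSet_lt measurable_const
          (((measurable_fst.comp measurable_fst).mul measurable_snd).add
            (measurable_snd.comp measurable_fst))
      apply MeasurableSet.inter
      · exact measurableSet_lt measurable_const measurable_snd
      · exact measurableSet_le (measurable_fst.comp measurable_fst) measurable_const
    have hprod : ∀ x, ℙ {ω | A ω * Y ω + B ω > x ∧ Y ω > x/2 ∧ A ω ≤ 1-δ}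
        = (ν.prod μ) (Sx x) := by
      intro x
      rw [← hmap, Measure.map_apply (hABmeas.prodMk hY) (hSxm x)]
      rfl
    -- key eventual bound
    have hkey : ∀ᶠ x in atTop, (ℙ {ω | A ω * Y ω + B ω > x ∧ Y ω > x/2 ∧ A ω ≤ 1-δ}).toReal
        ≤ CG * MY * Real.exp (-(b*(1+δ/2)) * x) := by
      filter_upwards [eventually_gt_atTop 0] with x hx0
      rw [hprod x, Measure.prod_apply_symm (hSxm x)]
      have hslice : ∀ y : ℝ, ν ((fun p => (p, y)) ⁻¹' Sx x)
          ≤ ENNReal.ofReal (CG * Real.exp (-(b*(1+δ/2)) * x))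
              * ENNReal.ofReal (Real.exp (b * max y 0)) := by
        intro y
        rcases le_or_gt y (x/2) with hy | hy
        · have : (fun p : ℝ × ℝ => (p, y)) ⁻¹' Sx x = ∅ := by
            ext p
            simp only [Set.mem_preimage, hSx, Set.mem_setOf_eq, Set.mem_empty_iff_false,
              iff_false, not_and]
            intro _ h2
            exact absurd h2 (not_lt.mpr hy)
          rw [this]
          simp
        · have hy0 : 0 < y := lt_trans (by linarith) hy
          have hsub : ν ((fun p : ℝ × ℝ => (p, y)) ⁻¹' Sx x)
              ≤ ν {p : ℝ × ℝ | p.2 > x - (1-δ)*y} := by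
            apply measure_mono_ae
            show ∀ᵐ p ∂ν, p ∈ (fun p : ℝ × ℝ => (p, y)) ⁻¹' Sx x →
              p ∈ {p : ℝ × ℝ | p.2 > x - (1-δ)*y}
            filter_upwards [hνae] with p hp hmem
            obtain ⟨hgt, -, hle⟩ := hmem
            have : p.1 * y ≤ (1-δ) * y := mul_le_mul_of_nonneg_right hle hy0.le
            show p.2 > x - (1-δ)*y
            have hgt' : p.1 * y + p.2 > x := hgt
            linarith
          have hGid : ν {p : ℝ × ℝ | p.2 > x - (1-δ)*y} = ℙ {ω | B ω > x - (1-δ)*y} := by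
            rw [hνdef, Measure.map_apply hABmeas
              (measurableSet_lt measurable_const measurable_snd)]
            rfl
          have hnum : g (x - (1-δ)*y) ≤ CG * Real.exp (-(b*(1+δ/2)) * x) * Real.exp (b * max y 0) := by
            have h1 : g (x - (1-δ)*y) ≤ CG * Real.exp (-b * (x - (1-δ)*y)) := hCG _
            have h2 : Real.exp (-b * (x - (1-δ)*y)) ≤ Real.exp (-(b*(1+δ/2)) * x) * Real.exp (b * max y 0) := by
              rw [← Real.exp_add]
              apply Real.exp_le_exp.mpr
              rw [max_eq_left hy0.le]
              nlinarith [mul_nonneg (mul_pos hb hδ0).le (by linarith : (0:ℝ) ≤ y - x/2)]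
            calc g (x - (1-δ)*y) ≤ CG * Real.exp (-b * (x - (1-δ)*y)) := h1
              _ ≤ CG * (Real.exp (-(b*(1+δ/2)) * x) * Real.exp (b * max y 0)) :=
                  mul_le_mul_of_nonneg_left h2 hCG0.le
              _ = CG * Real.exp (-(b*(1+δ/2)) * x) * Real.exp (b * max y 0) := by ring
          calc ν ((fun p : ℝ × ℝ => (p, y)) ⁻¹' Sx x)
              ≤ ν {p : ℝ × ℝ | p.2 > x - (1-δ)*y} := hsub
            _ = ENNReal.ofReal (g (x - (1-δ)*y)) := by rw [hGid, hGofReal]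
            _ ≤ ENNReal.ofReal (CG * Real.exp (-(b*(1+δ/2)) * x) * Real.exp (b * max y 0)) :=
                ENNReal.ofReal_le_ofReal hnum
            _ = ENNReal.ofReal (CG * Real.exp (-(b*(1+δ/2)) * x))
                * ENNReal.ofReal (Real.exp (b * max y 0)) := by
                rw [← ENNReal.ofReal_mul (by positivity)]
      have hint : ∫⁻ y, ν ((fun p => (p, y)) ⁻¹' Sx x) ∂μ
          ≤ ENNReal.ofReal (CG * Real.exp (-(b*(1+δ/2)) * x))
              * ∫⁻ y, ENNReal.ofReal (Real.exp (b * max y 0)) ∂μ := by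
        rw [← lintegral_const_mul' _ _ ENNReal.ofReal_ne_top]
        exact lintegral_mono hslice
      have hfin : ENNReal.ofReal (CG * Real.exp (-(b*(1+δ/2)) * x))
          * ∫⁻ y, ENNReal.ofReal (Real.exp (b * max y 0)) ∂μ ≠ ⊤ :=
        ENNReal.mul_ne_top ENNReal.ofReal_ne_top hEYplus.ne
      have := ENNReal.toReal_mono hfin hint
      rw [ENNReal.toReal_mul, ENNReal.toReal_ofReal (by positivity)] at this
      calc (∫⁻ y, ν ((fun p => (p, y)) ⁻¹' Sx x) ∂μ).toReal
          ≤ CG * Real.exp (-(b*(1+δ/2)) * x) * MY := this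
        _ = CG * MY * Real.exp (-(b*(1+δ/2)) * x) := by ring
    have hub : ∀ᶠ x in atTop, (ℙ {ω | A ω * Y ω + B ω > x ∧ Y ω > x/2 ∧ A ω ≤ 1-δ}).toReal / g x
        ≤ (2*CG*MY/a) * (x ^ (-c) * Real.exp (-(b*δ/2) * x)) := by
      filter_upwards [hkey, eventually_ge_atTop x0g, eventually_gt_atTop 0] with x hk hx0 hxpos
      have hglo := (hsg x hx0).1
      have hφx : 0 < phi a b c x := phi_pos ha hxpos
      have hφ2 : 0 < 1/2 * phi a b c x := by linarith
      have hstep1 : (ℙ {ω | A ω * Y ω + B ω > x ∧ Y ω > x/2 ∧ A ω ≤ 1-δ}).toReal / g x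
          ≤ (CG * MY * Real.exp (-(b*(1+δ/2)) * x)) / (1/2 * phi a b c x) := by
        apply div_le_div₀ ?_ hk hφ2 ?_
        · positivity
        · have := hglo
          unfold phi at this ⊢
          linarith
      refine le_trans hstep1 (le_of_eq ?_)
      have hxc : 0 < x ^ c := Real.rpow_pos_of_pos hxpos c
      have hE : Real.exp (-(b*(1+δ/2)) * x) = Real.exp (-b*x) * Real.exp (-(b*δ/2)*x) := by
        rw [← Real.exp_add]; congr 1; ring
      rw [hE, Real.rpow_neg hxpos.le]
      unfold phi
      have he1 : Real.exp (-b*x) ≠ 0 := Real.exp_ne_zero _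
      field_simp
    have hdown : Tendsto (fun x : ℝ => (2*CG*MY/a) * (x ^ (-c) * Real.exp (-(b*δ/2) * x)))
        atTop (nhds 0) := by
      have := tendsto_rpow_mul_exp_neg_mul_atTop_nhds_zero (-c) (b*δ/2) (by positivity)
      have h2 := this.const_mul (2*CG*MY/a)
      simpa using h2
    apply squeeze_zero' ?_ hub hdown
    filter_upwards with x
    exact div_nonneg ENNReal.toReal_nonneg (gpos x).le
  -- choice of δ
  have hδchoice : ∀ ε : ℝ, 0 < ε → ∃ δ : ℝ, 0 < δ ∧ δ < 1 ∧
      cY * (∫⁻ ω in A ⁻¹' (Set.Ioo (1-δ) 1), ENNReal.ofReal (Real.exp (b * B ω)) ∂ℙ).toReal < ε := by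
    intro ε hε
    have hdensm : Measurable fun ω => ENNReal.ofReal (Real.exp (b * B ω)) :=
      (Real.measurable_exp.comp (measurable_const.mul hB)).ennreal_ofReal
    set ρ : Measure ℝ :=
      Measure.map A ((ℙ : Measure Ω).withDensity fun ω => ENNReal.ofReal (Real.exp (b * B ω))) with hρ
    have hρap : ∀ T : Set ℝ, MeasurableSet T →
        ρ T = ∫⁻ ω in A ⁻¹' T, ENNReal.ofReal (Real.exp (b * B ω)) ∂ℙ := by
      intro T hT
      rw [hρ, Measure.map_apply hA hT, withDensity_apply _ (hA hT)]
    have hρfin : ∀ T : Set ℝ, ρ T ≠ ⊤ := by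
      intro T
      rcases Set.eq_empty_or_nonempty T with hT | hT
      · simp [hT]
      apply ne_top_of_le_ne_top ?_ (measure_mono (Set.subset_univ T))
      rw [hρ, Measure.map_apply hA MeasurableSet.univ]
      simp only [Set.preimage_univ]
      rw [← setLIntegral_univ, ← withDensity_apply _ MeasurableSet.univ] at hEB
      exact (hEB).ne
    have hanti2 : Antitone fun n : ℕ => Set.Ioo (1 - 1/(n+1) : ℝ) 1 := by
      intro n m hnm
      apply Set.Ioo_subset_Ioo_left
      have h1 : (0:ℝ) < n + 1 := by positivity
      have h2 : (n:ℝ) + 1 ≤ m + 1 := by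
        have : (n:ℝ) ≤ m := by exact_mod_cast hnm
        linarith
      have := one_div_le_one_div_of_le h1 h2
      linarith
    have hiInter : (⋂ n : ℕ, Set.Ioo (1 - 1/(n+1) : ℝ) 1) = ∅ := by
      ext u
      simp only [Set.mem_iInter, Set.mem_Ioo, Set.mem_empty_iff_false, iff_false, not_forall]
      by_contra hall
      push_neg at hall
      have hu1 : u < 1 := (hall 0).2
      obtain ⟨n, hn⟩ := exists_nat_one_div_lt (by linarith : (0:ℝ) < 1 - u)
      have h2 := (hall n).1
      linarith
    have htend := tendsto_measure_iInter_atTop (μ := ρ)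
      (fun n => measurableSet_Ioo.nullMeasurableSet) hanti2 ⟨0, hρfin _⟩
    rw [hiInter, measure_empty] at htend
    have htoReal : Tendsto (fun n : ℕ => cY * (ρ (Set.Ioo (1 - 1/(n+1):ℝ) 1)).toReal)
        atTop (nhds 0) := by
      have h2 := (ENNReal.tendsto_toReal ENNReal.zero_ne_top).comp htend
      simp only [ENNReal.toReal_zero] at h2
      simpa using h2.const_mul cY
    obtain ⟨n, hn, hn1⟩ :=
      ((htoReal.eventually (gt_mem_nhds hε)).and (eventually_ge_atTop 1)).exists
    refine ⟨1/(n+1), by positivity, ?_, ?_⟩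
    · have h1 : (1:ℝ) ≤ n := by exact_mod_cast hn1
      rw [div_lt_one (by positivity)]
      linarith
    · rw [← hρap _ measurableSet_Ioo]
      exact hn
  -- the remainder term tends to zero
  have hRlim : Tendsto (fun x =>
      (ℙ {ω | A ω * Y ω + B ω > x ∧ Y ω > x/2 ∧ A ω ≠ 1}).toReal / g x) atTop (nhds 0) := by
    rw [NormedAddCommGroup.tendsto_nhds_zero]
    intro ε hε
    obtain ⟨δ, hδ0, hδ1, hδε⟩ := hδchoice (ε/2) (by linarith)
    have hD := hDlim δ hδ0 hδ1
    have hV := hVlim (Set.Ioo (1-δ) 1) measurableSet_Ioo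
    have hDe : ∀ᶠ x in atTop,
        (ℙ {ω | A ω * Y ω + B ω > x ∧ Y ω > x/2 ∧ A ω ≤ 1-δ}).toReal / g x < ε/4 :=
      hD.eventually (gt_mem_nhds (by linarith))
    have hVe : ∀ᶠ x in atTop,
        (ℙ {ω | Y ω + B ω > x ∧ Y ω > x/2 ∧ A ω ∈ Set.Ioo (1-δ) 1}).toReal / g x < ε/2 :=
      hV.eventually (gt_mem_nhds hδε)
    filter_upwards [hDe, hVe, eventually_gt_atTop 0] with x hd hv hx0
    have hsub : ℙ {ω | A ω * Y ω + B ω > x ∧ Y ω > x/2 ∧ A ω ≠ 1}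
        ≤ ℙ {ω | A ω * Y ω + B ω > x ∧ Y ω > x/2 ∧ A ω ≤ 1-δ}
          + ℙ {ω | Y ω + B ω > x ∧ Y ω > x/2 ∧ A ω ∈ Set.Ioo (1-δ) 1} := by
      refine le_trans (measure_mono_ae ?_) (measure_union_le _ _)
      show ∀ᵐ ω ∂ℙ, ω ∈ {ω | A ω * Y ω + B ω > x ∧ Y ω > x/2 ∧ A ω ≠ 1} →
        ω ∈ {ω | A ω * Y ω + B ω > x ∧ Y ω > x/2 ∧ A ω ≤ 1-δ}
          ∪ {ω | Y ω + B ω > x ∧ Y ω > x/2 ∧ A ω ∈ Set.Ioo (1-δ) 1}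
      filter_upwards [hAae] with ω hω hmem
      obtain ⟨hgt, hY2, hne⟩ := hmem
      rcases le_or_gt (A ω) (1-δ) with hle | hgtδ
      · exact Set.mem_union_left _ ⟨hgt, hY2, hle⟩
      · apply Set.mem_union_right
        have hAlt1 : A ω < 1 := lt_of_le_of_ne hω.2 hne
        have hYpos : 0 < Y ω := lt_trans (by linarith) hY2
        refine ⟨?_, hY2, hgtδ, hAlt1⟩
        have hAY : A ω * Y ω ≤ Y ω := by nlinarith
        show Y ω + B ω > x
        have hgt' : A ω * Y ω + B ω > x := hgt
        linarith
    have hterm : (ℙ {ω | A ω * Y ω + B ω > x ∧ Y ω > x/2 ∧ A ω ≠ 1}).toReal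
        ≤ (ℙ {ω | A ω * Y ω + B ω > x ∧ Y ω > x/2 ∧ A ω ≤ 1-δ}).toReal
          + (ℙ {ω | Y ω + B ω > x ∧ Y ω > x/2 ∧ A ω ∈ Set.Ioo (1-δ) 1}).toReal := by
      have h3 := ENNReal.toReal_mono
        (ENNReal.add_ne_top.mpr ⟨measure_ne_top _ _, measure_ne_top _ _⟩) hsub
      rwa [ENNReal.toReal_add (measure_ne_top _ _) (measure_ne_top _ _)] at h3
    have hnn : 0 ≤ (ℙ {ω | A ω * Y ω + B ω > x ∧ Y ω > x/2 ∧ A ω ≠ 1}).toReal / g x :=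
      div_nonneg ENNReal.toReal_nonneg (gpos x).le
    rw [Real.norm_eq_abs, abs_of_nonneg hnn]
    have hfrac : (ℙ {ω | A ω * Y ω + B ω > x ∧ Y ω > x/2 ∧ A ω ≠ 1}).toReal / g x
        ≤ (ℙ {ω | A ω * Y ω + B ω > x ∧ Y ω > x/2 ∧ A ω ≤ 1-δ}).toReal / g x
          + (ℙ {ω | Y ω + B ω > x ∧ Y ω > x/2 ∧ A ω ∈ Set.Ioo (1-δ) 1}).toReal / g x := by
      rw [← add_div]
      gcongr
    linarith
  -- decomposition
  have hdecomp : ∀ x : ℝ, (ℙ {ω | A ω * Y ω + B ω > x}).toReal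
      = (ℙ {ω | A ω * Y ω + B ω > x ∧ Y ω ≤ x/2}).toReal
        + (ℙ {ω | Y ω + B ω > x ∧ Y ω > x/2 ∧ A ω ∈ ({1} : Set ℝ)}).toReal
        + (ℙ {ω | A ω * Y ω + B ω > x ∧ Y ω > x/2 ∧ A ω ≠ 1}).toReal := by
    intro x
    have hT1 : MeasurableSet {ω | Y ω ≤ x/2} := measurableSet_le hY measurable_const
    have hT2 : MeasurableSet {ω | A ω = 1} := hA (measurableSet_singleton 1)
    have h1 := measure_inter_add_diff (μ := ℙ) {ω | A ω * Y ω + B ω > x} hT1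
    have h2 := measure_inter_add_diff (μ := ℙ)
      ({ω | A ω * Y ω + B ω > x} \ {ω | Y ω ≤ x/2}) hT2
    have e1 : {ω | A ω * Y ω + B ω > x} ∩ {ω | Y ω ≤ x/2}
        = {ω | A ω * Y ω + B ω > x ∧ Y ω ≤ x/2} := rfl
    have e2 : ({ω | A ω * Y ω + B ω > x} \ {ω | Y ω ≤ x/2}) ∩ {ω | A ω = 1}
        = {ω | Y ω + B ω > x ∧ Y ω > x/2 ∧ A ω ∈ ({1} : Set ℝ)} := by
      ext ω
      simp only [Set.mem_inter_iff, Set.mem_diff, Set.mem_setOf_eq, Set.mem_singleton_iff,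
        not_le]
      constructor
      · rintro ⟨⟨hgt, hY2⟩, hA1⟩
        rw [hA1, one_mul] at hgt
        exact ⟨hgt, hY2, hA1⟩
      · rintro ⟨hgt, hY2, hA1⟩
        refine ⟨⟨?_, hY2⟩, hA1⟩
        rw [hA1, one_mul]
        exact hgt
    have e3 : ({ω | A ω * Y ω + B ω > x} \ {ω | Y ω ≤ x/2}) \ {ω | A ω = 1}
        = {ω | A ω * Y ω + B ω > x ∧ Y ω > x/2 ∧ A ω ≠ 1} := by
      ext ω
      simp only [Set.mem_diff, Set.mem_setOf_eq, not_le]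
      constructor
      · rintro ⟨⟨hgt, hY2⟩, hA1⟩
        exact ⟨hgt, hY2, hA1⟩
      · rintro ⟨hgt, hY2, hA1⟩
        exact ⟨⟨hgt, hY2⟩, hA1⟩
    rw [e1] at h1
    rw [e2, e3] at h2
    have hsum : ℙ {ω | A ω * Y ω + B ω > x}
        = ℙ {ω | A ω * Y ω + B ω > x ∧ Y ω ≤ x/2}
          + (ℙ {ω | Y ω + B ω > x ∧ Y ω > x/2 ∧ A ω ∈ ({1} : Set ℝ)}
             + ℙ {ω | A ω * Y ω + B ω > x ∧ Y ω > x/2 ∧ A ω ≠ 1}) := by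
      rw [← h1, ← h2]
    rw [hsum, ENNReal.toReal_add (measure_ne_top _ _) (by
        exact ENNReal.add_ne_top.mpr ⟨measure_ne_top _ _, measure_ne_top _ _⟩),
      ENNReal.toReal_add (measure_ne_top _ _) (measure_ne_top _ _)]
    ring
  -- assemble
  have hA1 : A ⁻¹' ({1} : Set ℝ) = {ω | A ω = 1} := rfl
  have hfinal := (hUlim.add (hVlim {1} (measurableSet_singleton 1))).add hRlim
  rw [hA1] at hfinal
  simp only [add_zero] at hfinal
  have heq : (fun x => (ℙ {ω | A ω * Y ω + B ω > x}).toReal / g x)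
      = fun x => ((ℙ {ω | A ω * Y ω + B ω > x ∧ Y ω ≤ x/2}).toReal / g x
          + (ℙ {ω | Y ω + B ω > x ∧ Y ω > x/2 ∧ A ω ∈ ({1} : Set ℝ)}).toReal / g x)
          + (ℙ {ω | A ω * Y ω + B ω > x ∧ Y ω > x/2 ∧ A ω ≠ 1}).toReal / g x := by
    funext x
    rw [hdecomp x]
    ring
  rw [heq]
  convert hfinal using 2
  ring
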